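/- arXiv:2203.06115 — 3 statements merged into one kernel-verified Lean document; each statement's English description precedes it below -/
import Mathlib

section
/- For any fixed 0 < δ < 1 there exists a constant C > 0 such that for all sufficiently large n ∈ ℕ the following holds: if s = ⌊(1−δ)n⌋ and d ≥ C·n^{1+1/(1−δ)}, then NO n×d matrix M with all entries in {−1,+1} is s-robust over ℝ; that is, every such matrix has some s columns that are linearly dependent over ℝ. -/
open scoped Classical

/-- A matrix is `s`-robust over a field `F` if every `s` of its columns are linearly
independent; equivalently, `M.mulVec a ≠ 0` for every nonzero `a` with support of size
at most `s`. -/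
def Robust {F : Type*} [Field F] {n d : ℕ} (M : Matrix (Fin n) (Fin d) F) (s : ℕ) : Prop :=
  ∀ a : Fin d → F, a ≠ 0 →
    (Finset.univ.filter fun i => a i ≠ 0).card ≤ s → M.mulVec a ≠ 0

section AuxLemmas

open Finset

lemma rho_pow_sum (s : Finset ℤ) (k₀ : ℤ) {ρ : ℝ} (hρ0 : 0 ≤ ρ) (hρ1 : ρ < 1) :
    ∑ k ∈ s, ρ ^ (k - k₀).natAbs ≤ 2 * (1 / (1 - ρ)) := by
  set f : ℤ → ℕ := fun k => (k - k₀).natAbs with hf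
  set B : ℕ := s.sup f + 1 with hB
  have hmaps : ∀ k ∈ s, f k ∈ Finset.range B := by
    intro k hk
    rw [Finset.mem_range, hB]
    exact Nat.lt_succ_of_le (Finset.le_sup hk)
  have := Finset.sum_fiberwise_of_maps_to hmaps (fun k => ρ ^ f k)
  rw [← this]
  have hfib : ∀ r ∈ Finset.range B,
      ∑ k ∈ s.filter (fun k => f k = r), ρ ^ f k ≤ 2 * ρ ^ r := by
    intro r _
    have hsub : s.filter (fun k => f k = r) ⊆ {k₀ + (r : ℤ), k₀ - (r : ℤ)} := by
      intro k hk
      rw [Finset.mem_filter] at hk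
      have := hk.2
      rw [hf] at this
      rcases Int.natAbs_eq_iff.1 this with h | h
      · simp only [Finset.mem_insert, Finset.mem_singleton]; left; omega
      · simp only [Finset.mem_insert, Finset.mem_singleton]; right; omega
    calc ∑ k ∈ s.filter (fun k => f k = r), ρ ^ f k
        = ∑ k ∈ s.filter (fun k => f k = r), ρ ^ r := by
          apply Finset.sum_congr rfl; intro k hk
          rw [Finset.mem_filter] at hk; rw [hk.2]
      _ = (s.filter (fun k => f k = r)).card * ρ ^ r := by
          rw [Finset.sum_const, nsmul_eq_mul]
      _ ≤ 2 * ρ ^ r := by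
          apply mul_le_mul_of_nonneg_right _ (pow_nonneg hρ0 _)
          have : ((s.filter (fun k => f k = r)).card : ℝ) ≤ (({k₀ + (r:ℤ), k₀ - (r:ℤ)} : Finset ℤ).card : ℝ) := by
            exact_mod_cast Finset.card_le_card hsub
          calc ((s.filter (fun k => f k = r)).card : ℝ) ≤ _ := this
            _ ≤ 2 := by
              have := Finset.card_insert_le (k₀ + (r:ℤ)) ({k₀ - (r:ℤ)} : Finset ℤ)
              simp only [Finset.card_singleton] at this
              exact_mod_cast this
  calc ∑ r ∈ Finset.range B, ∑ k ∈ s.filter (fun k => f k = r), ρ ^ f k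
      ≤ ∑ r ∈ Finset.range B, 2 * ρ ^ r := Finset.sum_le_sum hfib
    _ = 2 * ∑ r ∈ Finset.range B, ρ ^ r := by rw [Finset.mul_sum]
    _ ≤ 2 * (1 / (1 - ρ)) := by
      apply mul_le_mul_of_nonneg_left _ (by norm_num)
      rw [geom_sum_eq (by intro h; rw [h] at hρ1; linarith) B,
        show ρ ^ B - 1 = -(1 - ρ ^ B) by ring, show ρ - 1 = -(1 - ρ) by ring,
        neg_div_neg_eq]
      gcongr
      · nlinarith [pow_nonneg hρ0 B]

lemma geom_exp_sum (s : Finset ℤ) (μ τ : ℝ) (hτ0 : 0 < τ) (hτ1 : τ ≤ 1) :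
    ∑ k ∈ s, Real.exp (-(τ * |(k : ℝ) - μ|)) ≤ 11 / τ := by
  set k₀ : ℤ := round μ with hk₀
  set ρ : ℝ := Real.exp (-τ) with hρ
  have hρ0 : 0 ≤ ρ := (Real.exp_pos _).le
  have hρ1 : ρ < 1 := by rw [hρ, Real.exp_lt_one_iff]; linarith
  have hterm : ∀ k : ℤ, Real.exp (-(τ * |(k : ℝ) - μ|)) ≤
      Real.exp τ * ρ ^ (k - k₀).natAbs := by
    intro k
    have h1 : |(k : ℝ) - (k₀ : ℝ)| ≤ |(k : ℝ) - μ| + 1 := by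
      have h2 : |μ - (k₀ : ℝ)| ≤ 1 := by
        rw [hk₀]
        calc |μ - (round μ : ℝ)| ≤ 1/2 := abs_sub_round μ
          _ ≤ 1 := by norm_num
      have htri := abs_sub_le ((k : ℝ)) μ ((k₀ : ℝ))
      linarith
    have hcast : ((k - k₀).natAbs : ℝ) = |(k : ℝ) - (k₀ : ℝ)| := by
      rw [Nat.cast_natAbs]; push_cast; ring_nf
    have hpow : ρ ^ (k - k₀).natAbs = Real.exp (-(τ * ((k - k₀).natAbs : ℝ))) := by
      rw [hρ, ← Real.exp_nat_mul]; ring_nf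
    rw [hpow, ← Real.exp_add]
    apply Real.exp_le_exp.2
    rw [hcast]
    nlinarith [abs_nonneg ((k:ℝ) - μ)]
  have h1ρ : τ / 2 ≤ 1 - ρ := by
    have h2 : τ + 1 ≤ Real.exp τ := Real.add_one_le_exp τ
    have h3 : ρ = 1 / Real.exp τ := by rw [hρ, Real.exp_neg]; rw [one_div]
    have h4 : ρ ≤ 1 / (1 + τ) := by
      rw [h3]; gcongr; linarith
    have h5 : 1 / (1 + τ) ≤ 1 - τ/2 := by
      rw [div_le_iff₀ (by linarith)]; nlinarith
    linarith
  calc ∑ k ∈ s, Real.exp (-(τ * |(k : ℝ) - μ|))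
      ≤ ∑ k ∈ s, Real.exp τ * ρ ^ (k - k₀).natAbs :=
        Finset.sum_le_sum fun k _ => hterm k
    _ = Real.exp τ * ∑ k ∈ s, ρ ^ (k - k₀).natAbs := by rw [Finset.mul_sum]
    _ ≤ Real.exp τ * (2 * (1 / (1 - ρ))) := by
        exact mul_le_mul_of_nonneg_left (rho_pow_sum s k₀ hρ0 hρ1) (Real.exp_pos _).le
    _ ≤ 11 / τ := by
        have he : Real.exp τ ≤ Real.exp 1 := Real.exp_le_exp.2 hτ1
        have he1 : Real.exp 1 < 2.7182818286 := Real.exp_one_lt_d9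
        have h6 : 1 / (1 - ρ) ≤ 2 / τ := by
          rw [div_le_div_iff₀ (by linarith) hτ0]; linarith
        have hpos : (0:ℝ) ≤ 2 * (1 / (1 - ρ)) := by
          have : (0:ℝ) < 1 - ρ := by linarith
          positivity
        have h7 : Real.exp τ * (2 * (1 / (1 - ρ))) ≤ 2.7182818286 * (2 * (2/τ)) := by
          apply mul_le_mul (by linarith) _ hpos (by norm_num)
          apply mul_le_mul_of_nonneg_left h6 (by norm_num)
        calc Real.exp τ * (2 * (1 / (1 - ρ))) ≤ 2.7182818286 * (2 * (2/τ)) := h7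
          _ ≤ 11 / τ := by
            rw [show 2.7182818286 * (2 * (2/τ)) = (2.7182818286 * 4) / τ by ring]
            gcongr
            norm_num

lemma count_supersets {α : Type*} [Fintype α] [DecidableEq α] (t : ℕ) (u : Finset α)
    (hut : u.card ≤ t) :
    ((Finset.univ.powersetCard t).filter (fun A => u ⊆ A)).card
      = (Fintype.card α - u.card).choose (t - u.card) := by
  have h := Finset.card_powersetCard (t - u.card) (Finset.univ \ u)
  rw [Finset.card_sdiff_of_subset (Finset.subset_univ u), Finset.card_univ] at h
  rw [← h]
  apply Finset.card_bij' (fun A _ => A \ u) (fun B _ => B ∪ u)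
  · intro A hA
    simp only [Finset.mem_filter, Finset.mem_powersetCard] at hA
    obtain ⟨⟨_, hcard⟩, hsub⟩ := hA
    rw [Finset.mem_powersetCard]
    constructor
    · intro x hx
      rw [Finset.mem_sdiff] at hx ⊢
      exact ⟨Finset.mem_univ x, hx.2⟩
    · rw [Finset.card_sdiff_of_subset hsub, hcard]
  · intro B hB
    rw [Finset.mem_powersetCard] at hB
    obtain ⟨hsub, hcard⟩ := hB
    have hdisj : Disjoint B u := by
      apply Finset.disjoint_left.2
      intro x hx
      have := hsub hx
      rw [Finset.mem_sdiff] at this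
      exact this.2
    simp only [Finset.mem_filter, Finset.mem_powersetCard]
    refine ⟨⟨Finset.subset_univ _, ?_⟩, Finset.subset_union_right⟩
    rw [Finset.card_union_of_disjoint hdisj, hcard]
    omega
  · intro A hA
    simp only [Finset.mem_filter] at hA
    exact Finset.sdiff_union_of_subset hA.2
  · intro B hB
    rw [Finset.mem_powersetCard] at hB
    apply Finset.union_sdiff_cancel_right
    apply Finset.disjoint_left.2
    intro x hx
    have := hB.1 hx
    rw [Finset.mem_sdiff] at this
    exact this.2

lemma sum_sq_subsets_le {d t : ℕ} (ht : 2 ≤ t) (htd : t ≤ d) (c : Fin d → ℝ)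
    (hc : ∑ i, c i = 0) :
    ∑ A ∈ Finset.univ.powersetCard t, (∑ i ∈ A, c i)^2
      ≤ ((d-1).choose (t-1) : ℝ) * ∑ i, (c i)^2 := by
  classical
  set 𝒜 := (Finset.univ : Finset (Fin d)).powersetCard t with h𝒜
  have hcount : ∀ i i' : Fin d,
      (𝒜.filter (fun A => i ∈ A ∧ i' ∈ A)).card
        = if i = i' then (d-1).choose (t-1) else (d-2).choose (t-2) := by
    intro i i'
    by_cases h : i = i'
    · subst h
      rw [if_pos rfl]
      have := count_supersets (α := Fin d) t {i} (by simpa using by omega)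
      simp only [Finset.card_singleton, Fintype.card_fin, Finset.singleton_subset_iff] at this
      rw [← this]
      congr 1
      apply Finset.filter_congr
      intro A _
      simp [and_self]
    · rw [if_neg h]
      have hu : ({i, i'} : Finset (Fin d)).card = 2 := Finset.card_pair h
      have := count_supersets (α := Fin d) t {i, i'} (by rw [hu]; omega)
      rw [hu, Fintype.card_fin] at this
      rw [← this]
      congr 1
      apply Finset.filter_congr
      intro A _
      simp [Finset.insert_subset_iff, Finset.singleton_subset_iff]
  have hexp : ∑ A ∈ 𝒜, (∑ i ∈ A, c i)^2
      = ∑ i, ∑ i', (c i * c i') * ((𝒜.filter (fun A => i ∈ A ∧ i' ∈ A)).card : ℝ) := by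
    have h1 : ∀ A ∈ 𝒜, (∑ i ∈ A, c i)^2
        = ∑ i, ∑ i', (if i ∈ A ∧ i' ∈ A then c i * c i' else 0) := by
      intro A hA
      have h2 : ∑ i ∈ A, c i = ∑ i, (if i ∈ A then c i else 0) := by
        rw [Finset.sum_ite_mem, Finset.univ_inter]
      rw [pow_two, h2, Finset.sum_mul_sum]
      apply Finset.sum_congr rfl; intro i _
      apply Finset.sum_congr rfl; intro i' _
      by_cases hi : i ∈ A <;> by_cases hi' : i' ∈ A <;> simp [hi, hi']
    rw [Finset.sum_congr rfl h1, Finset.sum_comm]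
    apply Finset.sum_congr rfl; intro i _
    rw [Finset.sum_comm]
    apply Finset.sum_congr rfl; intro i' _
    rw [Finset.sum_ite, Finset.sum_const_zero, add_zero, Finset.sum_const, nsmul_eq_mul,
      mul_comm]
  rw [hexp]
  have hsplit : ∀ i : Fin d,
      ∑ i', (c i * c i') * ((𝒜.filter (fun A => i ∈ A ∧ i' ∈ A)).card : ℝ)
        = (c i)^2 * ((d-1).choose (t-1) : ℝ)
          + ((d-2).choose (t-2) : ℝ) * (c i * (- c i)) := by
    intro i
    rw [← Finset.add_sum_erase _ _ (Finset.mem_univ i)]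
    congr 1
    · rw [hcount i i, if_pos rfl]; ring
    · have h3 : ∀ i' ∈ Finset.univ.erase i,
          (c i * c i') * ((𝒜.filter (fun A => i ∈ A ∧ i' ∈ A)).card : ℝ)
            = ((d-2).choose (t-2) : ℝ) * (c i * c i') := by
        intro i' hi'
        rw [Finset.mem_erase] at hi'
        rw [hcount i i', if_neg (fun h => hi'.1 h.symm)]; ring
      rw [Finset.sum_congr rfl h3, ← Finset.mul_sum, ← Finset.mul_sum]
      congr 2
      have := Finset.add_sum_erase _ c (Finset.mem_univ i)
      rw [hc] at this
      linarith
  rw [Finset.sum_congr rfl (fun i _ => hsplit i), Finset.sum_add_distrib,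
    ← Finset.sum_mul, ← Finset.mul_sum]
  have hb : (0:ℝ) ≤ ((d-2).choose (t-2) : ℝ) := by positivity
  have hs : ∑ i, (c i * (- c i)) = - ∑ i, (c i)^2 := by
    rw [← Finset.sum_neg_distrib]
    apply Finset.sum_congr rfl; intros; ring
  rw [hs]
  have hnn : (0:ℝ) ≤ ∑ i, (c i)^2 := Finset.sum_nonneg fun i _ => sq_nonneg _
  nlinarith

lemma choose_lower_bound {d t : ℕ} (ht : 1 ≤ t) (htd : 2*t ≤ d) :
    ((d:ℝ)/(2*t))^t ≤ (d.choose t : ℝ) := by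
  have h1 : ((d + 1 - t)^t : ℕ) ≤ d.descFactorial t := Nat.pow_sub_le_descFactorial d t
  have h2 : d.descFactorial t = (Nat.factorial t) * d.choose t := Nat.descFactorial_eq_factorial_mul_choose d t
  have h3 : (Nat.factorial t) ≤ t ^ t := Nat.factorial_le_pow t
  have h4 : ((d + 1 - t)^t : ℕ) ≤ t^t * d.choose t := by
    calc ((d + 1 - t)^t : ℕ) ≤ (Nat.factorial t) * d.choose t := h1.trans (le_of_eq h2)
      _ ≤ t^t * d.choose t := Nat.mul_le_mul_right _ h3
  have h5 : ((d + 1 - t : ℕ) : ℝ)^t ≤ (t:ℝ)^t * (d.choose t : ℝ) := by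
    exact_mod_cast h4
  have h6 : (d:ℝ)/2 ≤ ((d + 1 - t : ℕ) : ℝ) := by
    have : ((d + 1 - t : ℕ) : ℝ) = (d:ℝ) + 1 - t := by
      have : t ≤ d + 1 := by omega
      push_cast [Nat.cast_sub this]; ring
    rw [this]
    have : (t:ℝ) ≤ d/2 := by
      have : (2*t : ℕ) ≤ (d:ℕ) := htd
      have := (Nat.cast_le (α := ℝ)).2 this
      push_cast at this
      linarith
    linarith
  have ht0 : (0:ℝ) < t := by exact_mod_cast ht
  have hd0 : (0:ℝ) ≤ d := Nat.cast_nonneg d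
  calc ((d:ℝ)/(2*t))^t = ((d:ℝ)/2)^t / (t:ℝ)^t := by
        rw [div_pow, div_pow, div_div, mul_pow]
      _ ≤ ((d + 1 - t : ℕ) : ℝ)^t / (t:ℝ)^t := by
        gcongr
      _ ≤ (t:ℝ)^t * (d.choose t : ℝ) / (t:ℝ)^t := by gcongr
      _ = (d.choose t : ℝ) := by
        field_simp

lemma collision_exists {n d t : ℕ} (ht : 2 ≤ t) (htd : 2*t ≤ d)
    (ε : Fin n → Fin d → ℤ) (hε : ∀ j i, ε j i = 1 ∨ ε j i = -1)
    (hN : (11 * Real.exp 2 * Real.sqrt t)^n < (d.choose t : ℝ)) :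
    ∃ A B : Finset (Fin d), A.card = t ∧ B.card = t ∧ A ≠ B ∧
      ∀ j, ∑ i ∈ A, ε j i = ∑ i ∈ B, ε j i := by
  classical
  by_contra hno
  set 𝒜 := (Finset.univ : Finset (Fin d)).powersetCard t with h𝒜
  set N : ℕ := d.choose t with hNdef
  have htd' : t ≤ d := by omega
  have hd0 : 0 < d := by omega
  have hNcard : 𝒜.card = N := by
    rw [h𝒜, Finset.card_powersetCard, Finset.card_univ, Fintype.card_fin]
  have hNpos : 0 < N := Nat.choose_pos htd'
  set S : Finset (Fin d) → (Fin n → ℤ) := fun A j => ∑ i ∈ A, ε j i with hS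
  have hmem : ∀ A, A ∈ 𝒜 ↔ A.card = t := by
    intro A
    rw [h𝒜, Finset.mem_powersetCard]
    exact ⟨fun h => h.2, fun h => ⟨Finset.subset_univ _, h⟩⟩
  have hinj : ∀ A ∈ 𝒜, ∀ B ∈ 𝒜, S A = S B → A = B := by
    intro A hA B hB hSAB
    by_contra hAB
    exact hno ⟨A, B, (hmem A).1 hA, (hmem B).1 hB, hAB, fun j => congrFun hSAB j⟩
  -- parameters
  set rt : ℝ := Real.sqrt t with hrt
  have hrt1 : 1 ≤ rt := by
    rw [hrt, show (1:ℝ) = Real.sqrt 1 by simp]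
    exact Real.sqrt_le_sqrt (by exact_mod_cast by omega)
  have hrt0 : 0 < rt := by linarith
  have hrt2 : rt * rt = (t:ℝ) := Real.mul_self_sqrt (by positivity)
  set τ : ℝ := 1 / rt with hτ
  have hτ0 : 0 < τ := by positivity
  have hτ1 : τ ≤ 1 := by rw [hτ]; rw [div_le_one hrt0]; exact hrt1
  have hτrt : τ * rt = 1 := by rw [hτ]; field_simp
  set μ : Fin n → ℝ := fun j => (t:ℝ) * (∑ i, (ε j i : ℝ)) / d with hμ
  set q : Fin n → ℤ → ℝ := fun j k => (τ/11) * Real.exp (-(τ * |(k:ℝ) - μ j|)) with hq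
  have hq0 : ∀ j k, 0 ≤ q j k := by intro j k; rw [hq]; positivity
  have hq1 : ∀ j, ∑ k ∈ Finset.Icc (-(t:ℤ)) (t:ℤ), q j k ≤ 1 := by
    intro j
    rw [hq, ← Finset.mul_sum]
    calc (τ/11) * ∑ k ∈ Finset.Icc (-(t:ℤ)) (t:ℤ), Real.exp (-(τ * |(k:ℝ) - μ j|))
        ≤ (τ/11) * (11/τ) := by
          apply mul_le_mul_of_nonneg_left (geom_exp_sum _ _ _ hτ0 hτ1) (by positivity)
      _ = 1 := by field_simp
  set box : Finset (Fin n → ℤ) :=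
    Fintype.piFinset (fun _ : Fin n => Finset.Icc (-(t:ℤ)) (t:ℤ)) with hbox
  have hSbox : ∀ A ∈ 𝒜, S A ∈ box := by
    intro A hA
    rw [hbox, Fintype.mem_piFinset]
    intro j
    rw [Finset.mem_Icc]
    have habs : |S A j| ≤ (t:ℤ) := by
      calc |S A j| ≤ ∑ i ∈ A, |ε j i| := Finset.abs_sum_le_sum_abs _ _
        _ = ∑ i ∈ A, 1 := by
          apply Finset.sum_congr rfl; intro i _
          rcases hε j i with h | h <;> rw [h] <;> rfl
        _ = (t:ℤ) := by rw [Finset.sum_const, (hmem A).1 hA]; simp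
    constructor <;> [linarith [neg_abs_le (S A j)]; linarith [le_abs_self (S A j)]]
  set w : Finset (Fin d) → ℝ := fun A => ∏ j, q j (S A j) with hw
  have hwsum : ∑ A ∈ 𝒜, w A ≤ 1 := by
    have h1 : ∑ A ∈ 𝒜, w A = ∑ x ∈ 𝒜.image S, ∏ j, q j (x j) := by
      rw [Finset.sum_image hinj]
    rw [h1]
    calc ∑ x ∈ 𝒜.image S, ∏ j, q j (x j)
        ≤ ∑ x ∈ box, ∏ j, q j (x j) := by
          apply Finset.sum_le_sum_of_subset_of_nonneg
          · intro x hx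
            rw [Finset.mem_image] at hx
            obtain ⟨A, hA, rfl⟩ := hx
            exact hSbox A hA
          · intro x _ _
            exact Finset.prod_nonneg fun j _ => hq0 j (x j)
      _ = ∏ j, ∑ k ∈ Finset.Icc (-(t:ℤ)) (t:ℤ), q j k := by
          rw [Finset.prod_univ_sum]
      _ ≤ 1 := by
          apply Finset.prod_le_one _ (fun j _ => hq1 j)
          intro j _
          exact Finset.sum_nonneg fun k _ => hq0 j k
  set T : Finset (Fin d) → ℝ := fun A => ∑ j, |((S A j : ℤ) : ℝ) - μ j| with hT
  have hweq : ∀ A, w A = (τ/11)^n * Real.exp (-(τ * T A)) := by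
    intro A
    simp only [hw, hq]
    rw [Finset.prod_mul_distrib, Finset.prod_const, Finset.card_univ, Fintype.card_fin,
      ← Real.exp_sum]
    congr 1
    rw [hT, Finset.mul_sum, ← Finset.sum_neg_distrib]
  -- variance bound
  have hTsum : ∑ A ∈ 𝒜, T A ≤ (N:ℝ) * (2 * n * rt) := by
    rw [hT, Finset.sum_comm]
    have hj : ∀ j : Fin n, ∑ A ∈ 𝒜, |((S A j : ℤ) : ℝ) - μ j| ≤ (N:ℝ) * (2 * rt) := by
      intro j
      set c : Fin d → ℝ := fun i => (ε j i : ℝ) - (∑ i', (ε j i' : ℝ))/d with hc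
      have hc0 : ∑ i, c i = 0 := by
        rw [hc, Finset.sum_sub_distrib, Finset.sum_const, Finset.card_univ, Fintype.card_fin]
        rw [nsmul_eq_mul]
        field_simp
        simp
      have hSAc : ∀ A ∈ 𝒜, ((S A j : ℤ) : ℝ) - μ j = ∑ i ∈ A, c i := by
        intro A hA
        rw [hc, Finset.sum_sub_distrib, Finset.sum_const, (hmem A).1 hA, hμ, hS]
        push_cast
        ring
      have hcsq : ∀ i, (c i)^2 ≤ 4 := by
        intro i
        have h1 : |(ε j i : ℝ)| ≤ 1 := by
          rcases hε j i with h | h <;> rw [h] <;> norm_num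
        have h2 : |(∑ i', (ε j i' : ℝ))/d| ≤ 1 := by
          rw [abs_div]
          rw [div_le_one (by positivity : (0:ℝ) < |(d:ℝ)|)]
          calc |∑ i', (ε j i' : ℝ)| ≤ ∑ i', |(ε j i' : ℝ)| := Finset.abs_sum_le_sum_abs _ _
            _ ≤ ∑ _i' : Fin d, (1:ℝ) := Finset.sum_le_sum fun i' _ => by
                rcases hε j i' with h | h <;> rw [h] <;> norm_num
            _ = (d:ℝ) := by simp
            _ ≤ |(d:ℝ)| := le_abs_self _
        have := abs_sub_abs_le_abs_sub (ε j i : ℝ) ((∑ i', (ε j i' : ℝ))/d)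
        have habs : |c i| ≤ 2 := by
          rw [hc]
          calc |(ε j i : ℝ) - (∑ i', (ε j i' : ℝ))/d|
              ≤ |(ε j i : ℝ)| + |(∑ i', (ε j i' : ℝ))/d| := abs_sub _ _
            _ ≤ 2 := by linarith
        nlinarith [abs_nonneg (c i), sq_abs (c i)]
      have hvar : ∑ A ∈ 𝒜, (∑ i ∈ A, c i)^2 ≤ ((d-1).choose (t-1) : ℝ) * (4*d) := by
        calc ∑ A ∈ 𝒜, (∑ i ∈ A, c i)^2 ≤ ((d-1).choose (t-1) : ℝ) * ∑ i, (c i)^2 :=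
              sum_sq_subsets_le ht htd' c hc0
          _ ≤ ((d-1).choose (t-1) : ℝ) * (4*d) := by
              apply mul_le_mul_of_nonneg_left _ (by positivity)
              calc ∑ i, (c i)^2 ≤ ∑ _i : Fin d, (4:ℝ) := Finset.sum_le_sum fun i _ => hcsq i
                _ = 4*d := by rw [Finset.sum_const, Finset.card_univ, Fintype.card_fin]; ring
      have hchoose : ((d:ℝ)) * ((d-1).choose (t-1) : ℝ) = (t:ℝ) * (N:ℝ) := by
        have h := Nat.add_one_mul_choose_eq (d-1) (t-1)
        have hd1 : d - 1 + 1 = d := by omega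
        have ht1 : t - 1 + 1 = t := by omega
        rw [hd1, ht1] at h
        have h2 : ((d:ℝ)) * ((d-1).choose (t-1) : ℝ) = (d.choose t : ℝ) * t := by
          exact_mod_cast h
        rw [h2, hNdef]; ring
      calc ∑ A ∈ 𝒜, |((S A j : ℤ) : ℝ) - μ j|
          ≤ ∑ A ∈ 𝒜, ((((S A j : ℤ) : ℝ) - μ j)^2/(4*rt) + rt) := by
            apply Finset.sum_le_sum
            intro A _
            set x : ℝ := ((S A j : ℤ) : ℝ) - μ j
            have h4 : 0 ≤ (|x| - 2*rt)^2 := sq_nonneg _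
            have h5 : x^2 = |x|^2 := (sq_abs x).symm
            rw [div_add' _ _ _ (by positivity), le_div_iff₀ (by positivity)]
            nlinarith [abs_nonneg x]
        _ = (∑ A ∈ 𝒜, (∑ i ∈ A, c i)^2)/(4*rt) + (N:ℝ) * rt := by
            rw [Finset.sum_add_distrib, Finset.sum_const, hNcard, ← Finset.sum_div]
            congr 2
            · apply Finset.sum_congr rfl
              intro A hA
              rw [hSAc A hA]
            · rw [nsmul_eq_mul]
        _ ≤ (((d-1).choose (t-1) : ℝ) * (4*d))/(4*rt) + (N:ℝ) * rt := by
            gcongr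
        _ = (N:ℝ) * (2 * rt) := by
            have : (((d-1).choose (t-1) : ℝ) * (4*d))/(4*rt)
                = ((d:ℝ) * ((d-1).choose (t-1) : ℝ))/rt := by ring
            rw [this, hchoose]
            rw [show (t:ℝ) = rt * rt from hrt2.symm]
            field_simp
            ring
    calc ∑ j : Fin n, ∑ A ∈ 𝒜, |((S A j : ℤ) : ℝ) - μ j|
        ≤ ∑ _j : Fin n, (N:ℝ) * (2 * rt) := Finset.sum_le_sum fun j _ => hj j
      _ = (N:ℝ) * (2 * n * rt) := by
          rw [Finset.sum_const, Finset.card_univ, Fintype.card_fin, nsmul_eq_mul]; ring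
  -- convexity lower bound
  have hTnn : ∀ A, 0 ≤ T A := by
    intro A
    exact Finset.sum_nonneg fun j _ => abs_nonneg _
  set m : ℝ := -(τ * (∑ A ∈ 𝒜, T A))/N with hm
  have hN0 : (N:ℝ) ≠ 0 := by
    have : (0:ℝ) < (N:ℝ) := by exact_mod_cast hNpos
    linarith
  have hsumTm : ∑ A ∈ 𝒜, (-(τ * T A)) = (N:ℝ) * m := by
    rw [hm, mul_comm, div_mul_cancel₀ _ hN0, Finset.sum_neg_distrib, ← Finset.mul_sum]
  have hexp_lower : (N:ℝ) * Real.exp m ≤ ∑ A ∈ 𝒜, Real.exp (-(τ * T A)) := by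
    have hpt : ∀ A ∈ 𝒜, Real.exp m * (1 + (-(τ * T A) - m)) ≤ Real.exp (-(τ * T A)) := by
      intro A _
      have h1 : (-(τ * T A) - m) + 1 ≤ Real.exp (-(τ * T A) - m) := Real.add_one_le_exp _
      have h2 : Real.exp (-(τ * T A)) = Real.exp m * Real.exp (-(τ * T A) - m) := by
        rw [← Real.exp_add]; ring_nf
      rw [h2]
      apply mul_le_mul_of_nonneg_left _ (Real.exp_pos m).le
      linarith
    calc (N:ℝ) * Real.exp m
        = ∑ A ∈ 𝒜, Real.exp m * (1 + (-(τ * T A) - m)) := by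
          rw [← Finset.mul_sum]
          rw [Finset.sum_add_distrib, Finset.sum_const, hNcard, Finset.sum_sub_distrib,
            hsumTm, Finset.sum_const, hNcard, nsmul_eq_mul, nsmul_eq_mul]
          ring
      _ ≤ ∑ A ∈ 𝒜, Real.exp (-(τ * T A)) := Finset.sum_le_sum hpt
  have hmlb : -(2*(n:ℝ)) ≤ m := by
    rw [hm, neg_div, neg_le_neg_iff, div_le_iff₀ (by exact_mod_cast hNpos)]
    calc τ * ∑ A ∈ 𝒜, T A ≤ τ * ((N:ℝ) * (2 * n * rt)) := by
          apply mul_le_mul_of_nonneg_left hTsum hτ0.le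
      _ = 2*(n:ℝ) * N := by
          rw [show τ * ((N:ℝ) * (2 * n * rt)) = (τ * rt) * (2 * n * (N:ℝ)) by ring, hτrt]
          ring
  -- combine
  have hfinal : (N:ℝ) * ((τ/11)^n * Real.exp (-(2*(n:ℝ)))) ≤ 1 := by
    calc (N:ℝ) * ((τ/11)^n * Real.exp (-(2*(n:ℝ))))
        ≤ (N:ℝ) * ((τ/11)^n * Real.exp m) := by
          apply mul_le_mul_of_nonneg_left _ (Nat.cast_nonneg N)
          apply mul_le_mul_of_nonneg_left _ (by positivity)
          exact Real.exp_le_exp.2 hmlb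
      _ = (τ/11)^n * ((N:ℝ) * Real.exp m) := by ring
      _ ≤ (τ/11)^n * ∑ A ∈ 𝒜, Real.exp (-(τ * T A)) := by
          apply mul_le_mul_of_nonneg_left hexp_lower (by positivity)
      _ = ∑ A ∈ 𝒜, w A := by
          rw [Finset.mul_sum]
          exact (Finset.sum_congr rfl fun A _ => by rw [hweq A]).symm
      _ ≤ 1 := hwsum
  have hcontra : (N:ℝ) ≤ (11 * Real.exp 2 * rt)^n := by
    have hpos : (0:ℝ) < (τ/11)^n * Real.exp (-(2*(n:ℝ))) := by positivity
    have h6 : (N:ℝ) ≤ 1 / ((τ/11)^n * Real.exp (-(2*(n:ℝ)))) := by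
      rw [le_div_iff₀ hpos]
      exact hfinal
    calc (N:ℝ) ≤ 1 / ((τ/11)^n * Real.exp (-(2*(n:ℝ)))) := h6
      _ = (11/τ)^n * Real.exp (2*(n:ℝ)) := by
        have hmulone : rt^n * τ^n = 1 := by
          rw [← mul_pow, mul_comm rt τ, hτrt, one_pow]
        rw [one_div, mul_inv, Real.exp_neg, inv_inv, ← inv_pow, inv_div]
      _ = (11 * Real.exp 2 * rt)^n := by
        have h7 : 11/τ = 11*rt := by rw [hτ]; field_simp
        rw [h7, show (2*(n:ℝ)) = (n:ℕ) * (2:ℝ) by push_cast; ring, Real.exp_nat_mul, ← mul_pow]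
        ring_nf
  linarith [hN]

end AuxLemmas

set_option maxHeartbeats 1000000 in
/-- For any fixed `0 < δ < 1` there is `C > 0` such that for all sufficiently large `n`,
if `s = ⌊(1 − δ)n⌋` and `d ≥ C n^{1 + 1/(1−δ)}`, then no `n × d` `±1` matrix is
`s`-robust over `ℝ`. -/
theorem no_robust_pm_one_matrix_for_large_d (δ : ℝ) (hδ0 : 0 < δ) (hδ1 : δ < 1) :
    ∃ C : ℝ, 0 < C ∧ ∃ n₀ : ℕ, ∀ n : ℕ, n₀ ≤ n → ∀ d : ℕ,
      C * (n : ℝ) ^ ((1 : ℝ) + 1 / (1 - δ)) ≤ (d : ℝ) →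
      ∀ M : Matrix (Fin n) (Fin d) ℝ, (∀ i j, M i j = 1 ∨ M i j = -1) →
        ¬ Robust M ⌊(1 - δ) * n⌋₊ := by
  have hβ0 : 0 < 1 - δ := by linarith
  refine ⟨2 * Real.exp (12/(1-δ)), by positivity, ?_⟩
  have hev1 : ∀ᶠ x : ℝ in Filter.atTop, |Real.log x| ≤ (1-δ) * |x| :=
    Asymptotics.isLittleO_iff.mp Real.isLittleO_log_id_atTop hβ0
  have hev2 : ∀ᶠ x : ℝ in Filter.atTop, max (8/(1-δ)) (max (60/(1-δ)) 1) ≤ x :=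
    Filter.eventually_ge_atTop _
  obtain ⟨x₀, hx₀⟩ := Filter.eventually_atTop.mp (hev1.and hev2)
  refine ⟨⌈x₀⌉₊ + 1, ?_⟩
  intro n hn d hd M hM
  have hxx₀ : x₀ ≤ (n:ℝ) := by
    calc x₀ ≤ (⌈x₀⌉₊ : ℝ) := Nat.le_ceil x₀
      _ ≤ (n : ℝ) := by exact_mod_cast Nat.le_of_succ_le hn
  obtain ⟨hlogx, hmaxx⟩ := hx₀ (n:ℝ) hxx₀
  have hx8 : 8/(1-δ) ≤ (n:ℝ) := le_trans (le_max_left _ _) hmaxx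
  have hx60 : 60/(1-δ) ≤ (n:ℝ) := le_trans (le_trans (le_max_left _ _) (le_max_right _ _)) hmaxx
  have hx1 : (1:ℝ) ≤ (n:ℝ) := le_trans (le_trans (le_max_right _ _) (le_max_right _ _)) hmaxx
  have hx0 : (0:ℝ) < (n:ℝ) := by linarith
  have hβx : 8 ≤ (1-δ) * (n:ℝ) := by
    rw [div_le_iff₀ hβ0] at hx8; linarith
  have hlogx' : Real.log (n:ℝ) ≤ (1-δ) * (n:ℝ) := by
    have h1 : Real.log (n:ℝ) ≤ |Real.log (n:ℝ)| := le_abs_self _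
    have h2 : |(n:ℝ)| = (n:ℝ) := abs_of_pos hx0
    rw [h2] at hlogx; linarith
  have hlogx0 : 0 ≤ Real.log (n:ℝ) := Real.log_nonneg hx1
  set s : ℕ := ⌊(1 - δ) * (n:ℝ)⌋₊ with hs
  set t : ℕ := s / 2 with ht
  have hsx : (s:ℝ) ≤ (1-δ) * (n:ℝ) := Nat.floor_le (by nlinarith)
  have hsx' : (1-δ) * (n:ℝ) - 1 < (s:ℝ) := by
    have h := Nat.lt_floor_add_one ((1-δ) * (n:ℝ))
    rw [← hs] at h
    linarith
  have h2ts : 2 * t ≤ s := by omega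
  have hts : ((1-δ) * (n:ℝ) - 2)/2 ≤ (t:ℝ) := by
    have h1 : s ≤ 2 * t + 1 := by omega
    have h2 : (s:ℝ) ≤ 2 * (t:ℝ) + 1 := by exact_mod_cast h1
    linarith
  have ht3 : (3:ℝ) ≤ (t:ℝ) := by linarith
  have ht3' : 3 ≤ t := by exact_mod_cast ht3
  have ht2 : 2 ≤ t := by omega
  have hsn : s ≤ n := by
    have h1 : ⌊(1-δ) * (n:ℝ)⌋₊ ≤ ⌊(n:ℝ)⌋₊ := Nat.floor_mono (by nlinarith)
    rw [Nat.floor_natCast, ← hs] at h1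
    exact h1
  have htn : (t:ℝ) ≤ (n:ℝ) := by
    have h1 : t ≤ n := le_trans (Nat.div_le_self s 2) hsn
    exact_mod_cast h1
  have hrpow : (n:ℝ) ≤ (n:ℝ) ^ ((1:ℝ) + 1/(1-δ)) := by
    calc (n:ℝ) = (n:ℝ) ^ (1:ℝ) := (Real.rpow_one _).symm
      _ ≤ (n:ℝ) ^ ((1:ℝ) + 1/(1-δ)) := by
        apply Real.rpow_le_rpow_of_exponent_le hx1
        have : 0 < 1/(1-δ) := by positivity
        linarith
  have hexp1 : (1:ℝ) ≤ Real.exp (12/(1-δ)) := by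
    rw [Real.one_le_exp_iff]; positivity
  have hxd : (n:ℝ) ≤ (d:ℝ) := by nlinarith
  have hnd : n ≤ d := by exact_mod_cast hxd
  have h2td : 2 * t ≤ d := le_trans (le_trans h2ts hsn) hnd
  have hd0 : (0:ℝ) < d := by linarith
  have ht0 : (0:ℝ) < (t:ℝ) := by linarith
  -- main numeric inequality
  have hkey : (11 * Real.exp 2 * Real.sqrt t)^n < ((d:ℝ)/(2*t))^t := by
    rw [← Real.log_lt_log_iff (by positivity) (by positivity)]
    rw [Real.log_pow, Real.log_pow]
    have hlog11 : Real.log 11 ≤ 2.78 := by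
      calc Real.log 11 ≤ Real.log 16 := Real.log_le_log (by norm_num) (by norm_num)
        _ = 4 * Real.log 2 := by
          rw [show (16:ℝ) = 2^4 by norm_num, Real.log_pow]; norm_num
        _ ≤ 2.78 := by linarith [Real.log_two_lt_d9]
    have hlogsplit : Real.log (11 * Real.exp 2 * Real.sqrt t)
        = Real.log 11 + 2 + Real.log (t:ℝ) / 2 := by
      rw [Real.log_mul (by positivity) (by positivity),
        Real.log_mul (by norm_num) (Real.exp_ne_zero 2), Real.log_exp,
        Real.log_sqrt (by positivity)]
    have hlogt : Real.log (t:ℝ) ≤ Real.log (n:ℝ) := Real.log_le_log ht0 htn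
    have hlogt0 : 0 ≤ Real.log (t:ℝ) := Real.log_nonneg (by linarith)
    have hlogd : 12/(1-δ) + (1/(1-δ)) * Real.log (n:ℝ) ≤ Real.log ((d:ℝ)/(2*t)) := by
      have h4 : (2 * Real.exp (12/(1-δ)) * (n:ℝ) ^ ((1:ℝ) + 1/(1-δ)))/(2*(n:ℝ))
          = Real.exp (12/(1-δ)) * (n:ℝ) ^ ((1:ℝ)/(1-δ)) := by
        rw [Real.rpow_add hx0, Real.rpow_one]
        rw [show (1:ℝ)/(1-δ) = 1/(1-δ) by norm_num]
        field_simp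
      have h1 : Real.exp (12/(1-δ)) * (n:ℝ) ^ ((1:ℝ)/(1-δ)) ≤ (d:ℝ)/(2*t) := by
        have h2 : (d:ℝ)/(2*(n:ℝ)) ≤ (d:ℝ)/(2*t) :=
          div_le_div_of_nonneg_left hd0.le (by positivity) (by linarith)
        have h3 : (2 * Real.exp (12/(1-δ)) * (n:ℝ) ^ ((1:ℝ) + 1/(1-δ)))/(2*(n:ℝ))
            ≤ (d:ℝ)/(2*(n:ℝ)) := by
          gcongr
        rw [h4] at h3
        linarith
      calc 12/(1-δ) + (1/(1-δ)) * Real.log (n:ℝ)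
          = Real.log (Real.exp (12/(1-δ)) * (n:ℝ) ^ ((1:ℝ)/(1-δ))) := by
            rw [Real.log_mul (Real.exp_ne_zero _) (by positivity), Real.log_exp,
              Real.log_rpow hx0]
            try ring
        _ ≤ Real.log ((d:ℝ)/(2*t)) := Real.log_le_log (by positivity) h1
    have hfactor0 : 0 ≤ 12/(1-δ) + (1/(1-δ)) * Real.log (n:ℝ) := by positivity
    have hstep1 : (n:ℝ) * Real.log (11 * Real.exp 2 * Real.sqrt t)
        ≤ (n:ℝ) * (4.78 + Real.log (n:ℝ) / 2) := by
      rw [hlogsplit]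
      apply mul_le_mul_of_nonneg_left _ hx0.le
      linarith
    have hstep2 : ((1-δ)*(n:ℝ)/2 - 1) * (12/(1-δ) + (1/(1-δ)) * Real.log (n:ℝ))
        ≤ (t:ℝ) * Real.log ((d:ℝ)/(2*t)) := by
      have h5 : ((1-δ)*(n:ℝ)/2 - 1) ≤ (t:ℝ) := by linarith
      have h6 : 0 ≤ ((1-δ)*(n:ℝ)/2 - 1) := by nlinarith
      have h7 : 0 ≤ Real.log ((d:ℝ)/(2*t)) := le_trans hfactor0 hlogd
      nlinarith
    have hexpand : ((1-δ)*(n:ℝ)/2 - 1) * (12/(1-δ) + (1/(1-δ)) * Real.log (n:ℝ))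
        = 6*(n:ℝ) + ((n:ℝ)/2) * Real.log (n:ℝ) - 12/(1-δ) - (1/(1-δ)) * Real.log (n:ℝ) := by
      field_simp
      ring
    have hsmall : 12/(1-δ) + (1/(1-δ)) * Real.log (n:ℝ) < 1.22 * (n:ℝ) := by
      have h7 : (1/(1-δ)) * Real.log (n:ℝ) ≤ (n:ℝ) := by
        calc (1/(1-δ)) * Real.log (n:ℝ) ≤ (1/(1-δ)) * ((1-δ) * (n:ℝ)) := by
              apply mul_le_mul_of_nonneg_left hlogx' (by positivity)
          _ = (n:ℝ) := by field_simp
      have h8 : 12/(1-δ) ≤ 0.2 * (n:ℝ) := by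
        rw [div_le_iff₀ hβ0] at hx60 ⊢
        nlinarith
      linarith
    calc (n:ℝ) * Real.log (11 * Real.exp 2 * Real.sqrt t)
        ≤ (n:ℝ) * (4.78 + Real.log (n:ℝ) / 2) := hstep1
      _ < 6*(n:ℝ) + ((n:ℝ)/2) * Real.log (n:ℝ) - 12/(1-δ) - (1/(1-δ)) * Real.log (n:ℝ) := by
          nlinarith
      _ = ((1-δ)*(n:ℝ)/2 - 1) * (12/(1-δ) + (1/(1-δ)) * Real.log (n:ℝ)) := hexpand.symm
      _ ≤ (t:ℝ) * Real.log ((d:ℝ)/(2*t)) := hstep2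
  have hN : (11 * Real.exp 2 * Real.sqrt t)^n < (d.choose t : ℝ) :=
    lt_of_lt_of_le hkey (choose_lower_bound (by omega) h2td)
  -- matrix to sign pattern
  set ε : Fin n → Fin d → ℤ := fun i j => if M i j = 1 then 1 else -1 with hε
  have hεpm : ∀ i j, ε i j = 1 ∨ ε i j = -1 := by
    intro i j
    simp only [hε]
    by_cases h : M i j = 1
    · left; rw [if_pos h]
    · right; rw [if_neg h]
  have hεcast : ∀ i j, ((ε i j : ℤ) : ℝ) = M i j := by
    intro i j
    rcases hM i j with h | h
    · simp only [hε, if_pos h, Int.cast_one, h]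
    · have h1 : M i j ≠ 1 := by rw [h]; norm_num
      simp only [hε, if_neg h1, Int.cast_neg, Int.cast_one, h]
  obtain ⟨A, B, hA, hB, hAB, hsum⟩ := collision_exists ht2 h2td ε hεpm hN
  intro hRob
  set a : Fin d → ℝ := fun i => (if i ∈ A then (1:ℝ) else 0) - (if i ∈ B then (1:ℝ) else 0)
    with ha
  have ha0 : a ≠ 0 := by
    have h1 : ¬ ∀ i, i ∈ A ↔ i ∈ B := fun h => hAB (Finset.ext h)
    push_neg at h1
    obtain ⟨i, hi⟩ := h1
    intro h0
    have h2 := congrFun h0 i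
    simp only [ha, Pi.zero_apply] at h2
    by_cases hiA : i ∈ A <;> by_cases hiB : i ∈ B <;>
      simp [hiA, hiB] at h2 hi
  have hsupp : (Finset.univ.filter fun i => a i ≠ 0).card ≤ s := by
    have h1 : (Finset.univ.filter fun i => a i ≠ 0) ⊆ A ∪ B := by
      intro i hi
      rw [Finset.mem_filter] at hi
      by_contra h2
      rw [Finset.mem_union] at h2
      push_neg at h2
      apply hi.2
      simp [ha, h2.1, h2.2]
    calc (Finset.univ.filter fun i => a i ≠ 0).card ≤ (A ∪ B).card :=
          Finset.card_le_card h1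
      _ ≤ A.card + B.card := Finset.card_union_le A B
      _ = 2 * t := by rw [hA, hB]; ring
      _ ≤ s := h2ts
  have hmul : M.mulVec a = 0 := by
    funext i
    have h1 : M.mulVec a i = ∑ j, M i j * a j := by
      simp [Matrix.mulVec, dotProduct]
    rw [h1]
    have h2 : ∀ j, M i j * a j
        = (if j ∈ A then M i j else 0) - (if j ∈ B then M i j else 0) := by
      intro j
      simp only [ha]
      by_cases hjA : j ∈ A <;> by_cases hjB : j ∈ B <;> simp [hjA, hjB]
    rw [Finset.sum_congr rfl (fun j _ => h2 j), Finset.sum_sub_distrib,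
      Finset.sum_ite_mem, Finset.sum_ite_mem, Finset.univ_inter, Finset.univ_inter]
    have h3 : ∑ j ∈ A, M i j = ((∑ j ∈ A, ε i j : ℤ) : ℝ) := by
      push_cast
      exact Finset.sum_congr rfl fun j _ => (hεcast i j).symm
    have h4 : ∑ j ∈ B, M i j = ((∑ j ∈ B, ε i j : ℤ) : ℝ) := by
      push_cast
      exact Finset.sum_congr rfl fun j _ => (hεcast i j).symm
    rw [h3, h4, hsum i]
    simp
  exact hRob a ha0 hsupp hmul
end

section
/- There is an absolute constant C > 0 such that for every ε ∈ (0,1), every even integer n ≥ 2, and every integer m with 0 ≤ m ≤ (1−ε)n, one has |α(n,m) − 1| ≤ C·m/(εn). -/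
open scoped Classical

/-- Number of pairs `(ξ, ξ')` of Boolean vectors such that `ξ₁+⋯+ξ_n = 0` and
`ξ₁+⋯+ξ_m+ξ'_{m+1}+⋯+ξ'_n = 0`, where `true ↦ +1` and `false ↦ −1`. -/
def countBoth (n m : ℕ) : ℕ :=
  (Finset.univ.filter fun ξ : (Fin n → Bool) × (Fin n → Bool) =>
    (∑ i : Fin n, (if ξ.1 i then (1 : ℤ) else -1)) = 0 ∧
    (∑ i : Fin n, (if (i : ℕ) < m then (if ξ.1 i then (1 : ℤ) else -1)
           else (if ξ.2 i then (1 : ℤ) else -1))) = 0).card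

/-- Number of Boolean vectors `ξ` with `ξ₁+⋯+ξ_n = 0`, where `true ↦ +1`, `false ↦ −1`. -/
def countZero (n : ℕ) : ℕ :=
  (Finset.univ.filter fun ξ : Fin n → Bool =>
    (∑ i : Fin n, (if ξ i then (1 : ℤ) else -1)) = 0).card

/-- `α(n,m) = P[ξ₁+⋯+ξ_n = 0 ∧ ξ₁+⋯+ξ_m+ξ'_{m+1}+⋯+ξ'_n = 0] / P[ξ₁+⋯+ξ_n = 0]²`
for i.i.d. Rademacher random variables `ξᵢ, ξ'ᵢ`. -/
noncomputable def alphaCorr (n m : ℕ) : ℝ :=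
  ((countBoth n m : ℝ) / 2 ^ (2 * n)) / ((countZero n : ℝ) / 2 ^ n) ^ 2


section Helpers
open Finset
lemma sum_pm {n : ℕ} (S : Finset (Fin n)) (ξ : Fin n → Bool) :
    (∑ i ∈ S, (if ξ i then (1:ℤ) else -1))
      = 2 * (S.filter fun i => ξ i = true).card - S.card := by
  rw [← Finset.sum_filter_add_sum_filter_not S (fun i => ξ i = true)]
  have h1 : ∑ i ∈ S.filter (fun i => ξ i = true), (if ξ i then (1:ℤ) else -1)
      = (S.filter fun i => ξ i = true).card := by
    have := Finset.sum_congr rfl (g := fun _ => (1:ℤ)) (s₁ := S.filter (fun i => ξ i = true))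
      (s₂ := S.filter (fun i => ξ i = true)) (f := fun i => if ξ i then (1:ℤ) else -1)
      (fun i hi => by simp only [Finset.mem_filter] at hi; simp [hi.2])
    rw [this, Finset.sum_const, nsmul_eq_mul, mul_one]
  have h2 : ∑ i ∈ S.filter (fun i => ¬ (ξ i = true)), (if ξ i then (1:ℤ) else -1)
      = -((S.filter fun i => ¬ (ξ i = true)).card) := by
    have := Finset.sum_congr rfl (g := fun _ => (-1:ℤ)) (s₁ := S.filter (fun i => ¬ (ξ i = true)))
      (s₂ := S.filter (fun i => ¬ (ξ i = true))) (f := fun i => if ξ i then (1:ℤ) else -1)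
      (fun i hi => by simp only [Finset.mem_filter] at hi; simp [hi.2])
    rw [this, Finset.sum_const, nsmul_eq_mul, mul_neg_one, neg_inj]
  rw [h1, h2]
  have h3 := Finset.card_filter_add_card_filter_not (s := S) (p := fun i => ξ i = true)
  have h4 : ((S.filter fun i => ¬ (ξ i = true)).card : ℤ)
      = (S.card : ℤ) - (S.filter fun i => ξ i = true).card := by
    omega
  rw [h4]; ring

lemma count_pattern {n : ℕ} (S : Finset (Fin n)) (p : Fin n → Bool) (t : ℕ) :
    (univ.filter fun ξ : Fin n → Bool =>
      (∀ i ∉ S, ξ i = p i) ∧ (S.filter fun i => ξ i = true).card = t).card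
      = (S.card).choose t := by
  rw [← Finset.card_powersetCard]
  apply Finset.card_bij (fun ξ _ => S.filter fun i => ξ i = true)
  · intro ξ hξ
    simp only [Finset.mem_filter, mem_univ, true_and] at hξ
    rw [Finset.mem_powersetCard]
    exact ⟨Finset.filter_subset _ _, hξ.2⟩
  · intro ξ hξ ξ' hξ' h
    simp only [Finset.mem_filter, mem_univ, true_and] at hξ hξ'
    funext i
    by_cases hi : i ∈ S
    · by_cases hv : ξ i = true
      · have : i ∈ S.filter fun i => ξ i = true := by simp [hi, hv]
        rw [h] at this
        simp only [Finset.mem_filter] at this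
        rw [hv, this.2]
      · have : i ∉ S.filter fun i => ξ' i = true := by
          rw [← h]; simp [hv]
        simp only [Finset.mem_filter, hi, true_and] at this
        simp only [Bool.not_eq_true] at hv this
        rw [hv, this]
    · rw [hξ.1 i hi, hξ'.1 i hi]
  · intro u hu
    rw [Finset.mem_powersetCard] at hu
    have hset : (S.filter fun i => (if i ∈ S then decide (i ∈ u) else p i) = true) = u := by
      ext i
      simp only [Finset.mem_filter]
      constructor
      · rintro ⟨hiS, hv⟩
        simp [hiS] at hv; exact hv
      · intro hiu
        have hiS := hu.1 hiu
        refine ⟨hiS, by simp [hiS, hiu]⟩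
    refine ⟨fun i => if i ∈ S then decide (i ∈ u) else p i, ?_, hset⟩
    simp only [Finset.mem_filter, mem_univ, true_and]
    refine ⟨fun i hi => by simp [hi], by rw [hset, hu.2]⟩

lemma count_free {n : ℕ} (S : Finset (Fin n)) (p : Fin n → Bool) :
    (univ.filter fun ξ : Fin n → Bool => ∀ i ∉ S, ξ i = p i).card = 2 ^ S.card := by
  rw [← Finset.card_powerset]
  apply Finset.card_bij (fun ξ _ => S.filter fun i => ξ i = true)
  · intro ξ hξ
    rw [Finset.mem_powerset]
    exact Finset.filter_subset _ _
  · intro ξ hξ ξ' hξ' h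
    simp only [Finset.mem_filter, mem_univ, true_and] at hξ hξ'
    funext i
    by_cases hi : i ∈ S
    · by_cases hv : ξ i = true
      · have : i ∈ S.filter fun i => ξ i = true := by simp [hi, hv]
        rw [h] at this
        simp only [Finset.mem_filter] at this
        rw [hv, this.2]
      · have : i ∉ S.filter fun i => ξ' i = true := by
          rw [← h]; simp [hv]
        simp only [Finset.mem_filter, hi, true_and] at this
        simp only [Bool.not_eq_true] at hv this
        rw [hv, this]
    · rw [hξ i hi, hξ' i hi]
  · intro u hu
    rw [Finset.mem_powerset] at hu
    refine ⟨fun i => if i ∈ S then decide (i ∈ u) else p i, ?_, ?_⟩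
    · simp only [Finset.mem_filter, mem_univ, true_and]
      intro i hi; simp [hi]
    · ext i
      simp only [Finset.mem_filter]
      constructor
      · rintro ⟨hiS, hv⟩
        simp [hiS] at hv; exact hv
      · intro hiu
        have hiS := hu hiu
        refine ⟨hiS, by simp [hiS, hiu]⟩

lemma card_lt_filter {n m : ℕ} (hmn : m ≤ n) :
    (univ.filter fun i : Fin n => (i : ℕ) < m).card = m := by
  have key : (univ.filter fun i : Fin n => (i : ℕ) < m).card = (univ : Finset (Fin m)).card := by
    apply Finset.card_bij (fun (i : Fin n) (hi : i ∈ univ.filter fun i : Fin n => (i:ℕ) < m) =>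
      (⟨(i:ℕ), by simpa using hi⟩ : Fin m))
    · intros; exact mem_univ _
    · intro a ha b hb h
      simpa [Fin.ext_iff] using h
    · intro b _
      exact ⟨⟨(b:ℕ), lt_of_lt_of_le b.2 hmn⟩, by simp [b.2], rfl⟩
  rw [key]; simp

lemma card_filter_prod {A B : Type*} [Fintype A] [Fintype B]
    (P : A → Prop) (Q : A → B → Prop) :
    (univ.filter fun x : A × B => P x.1 ∧ Q x.1 x.2).card
      = ∑ a ∈ univ.filter P, (univ.filter fun b => Q a b).card := by
  rw [Finset.card_eq_sum_card_fiberwise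
    (f := Prod.fst) (t := univ.filter P)
    (fun x hx => by simp only [Finset.coe_filter, Set.mem_setOf_eq, Finset.mem_filter, mem_univ, true_and] at hx ⊢; exact hx.1)]
  apply Finset.sum_congr rfl
  intro a ha
  simp only [Finset.mem_filter, mem_univ, true_and] at ha
  apply Finset.card_bij (fun (x : A × B) _ => x.2)
  · intro x hx
    simp only [Finset.mem_filter, mem_univ, true_and] at hx ⊢
    rw [← hx.2]; exact hx.1.2
  · intro x hx y hy h
    simp only [Finset.mem_filter, mem_univ, true_and] at hx hy
    exact Prod.ext (hx.2.trans hy.2.symm) h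
  · intro b hb
    simp only [Finset.mem_filter, mem_univ, true_and] at hb
    exact ⟨(a, b), by simp [ha, hb], rfl⟩

lemma step_even (j : ℕ) :
    16 * ((2*j) * ((2*j).choose j)^2) ≤ (2*(j+1)) * ((2*(j+1)).choose (j+1))^2 := by
  set a := (2*j).choose j with ha
  set b := (2*j+1).choose j with hb
  set c := (2*j+2).choose (j+1) with hc
  have e1 : (2*j+1) * a = b * (j+1) := by
    have := Nat.add_one_mul_choose_eq (2*j) j
    have hsymm : (2*j+1).choose (j+1) = (2*j+1).choose j := by
      rw [← Nat.choose_symm (by omega : j+1 ≤ 2*j+1)]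
      congr 1; omega
    rw [hsymm] at this
    simpa [ha, hb] using this
  have e2 : (2*j+2) * b = c * (j+1) := by
    have := Nat.add_one_mul_choose_eq (2*j+1) j
    simpa [hb, hc, Nat.succ_eq_add_one] using this
  have key : c * (j+1)^2 = (2*j+2) * ((2*j+1) * a) := by
    calc c * (j+1)^2 = (c * (j+1)) * (j+1) := by ring
    _ = ((2*j+2) * b) * (j+1) := by rw [e2]
    _ = (2*j+2) * (b * (j+1)) := by ring
    _ = (2*j+2) * ((2*j+1) * a) := by rw [e1]
  have hq : 2*(j+1) = 2*j+2 := by ring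
  rw [hq]
  have expand : (2*j+2) * c^2 * (j+1)^4 = (2*j+2)^3 * (2*j+1)^2 * a^2 := by
    calc (2*j+2) * c^2 * (j+1)^4 = (2*j+2) * (c * (j+1)^2)^2 := by ring
    _ = (2*j+2) * ((2*j+2) * ((2*j+1) * a))^2 := by rw [key]
    _ = (2*j+2)^3 * (2*j+1)^2 * a^2 := by ring
  have hineq : 16 * (2*j * a^2) * (j+1)^4 ≤ (2*j+2)^3 * (2*j+1)^2 * a^2 := by
    have h0 : 16 * (2*j) * (j+1)^4 ≤ (2*j+2)^3 * (2*j+1)^2 := by nlinarith [sq_nonneg j]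
    calc 16 * (2*j * a^2) * (j+1)^4 = (16 * (2*j) * (j+1)^4) * a^2 := by ring
    _ ≤ ((2*j+2)^3 * (2*j+1)^2) * a^2 := Nat.mul_le_mul_right _ h0
    _ = (2*j+2)^3 * (2*j+1)^2 * a^2 := by ring
  have hpos : 0 < (j+1)^4 := by positivity
  have := hineq.trans_eq expand.symm
  calc 16 * (2*j * a^2) = (16 * (2*j * a^2) * (j+1)^4) / (j+1)^4 := by
        rw [Nat.mul_div_cancel _ hpos]
  _ ≤ ((2*j+2) * c^2 * (j+1)^4) / (j+1)^4 := Nat.div_le_div_right this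
  _ = (2*j+2) * c^2 := Nat.mul_div_cancel _ hpos

lemma d_mono_even (i : ℕ) : ∀ j, i ≤ j →
    (2*i) * ((2*i).choose i)^2 * 16^(j-i) ≤ (2*j) * ((2*j).choose j)^2 := by
  intro j hj
  induction j, hj using Nat.le_induction with
  | base => simp
  | succ j hj ih =>
    have hs : j + 1 - i = (j - i) + 1 := by omega
    calc (2*i) * ((2*i).choose i)^2 * 16^(j+1-i)
        = 16 * ((2*i) * ((2*i).choose i)^2 * 16^(j-i)) := by rw [hs]; ring
    _ ≤ 16 * ((2*j) * ((2*j).choose j)^2) := Nat.mul_le_mul_left _ ih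
    _ ≤ (2*(j+1)) * ((2*(j+1)).choose (j+1))^2 := step_even j

lemma L4even {J i : ℕ} (hij : i ≤ J) :
    (2*i) * (2^(2*J-2*i) * (2*i).choose ((2*i)/2))^2 ≤ (2*J) * ((2*J).choose ((2*J)/2))^2 := by
  have hpow : (2^(2*J-2*i))^2 = 16^(J - i) := by
    have h1 : 2*J - 2*i = 2*(J-i) := by omega
    rw [h1, ← pow_mul, show (16:ℕ) = 2^4 by norm_num, ← pow_mul]
    congr 1
    omega
  have := d_mono_even i J hij
  calc (2*i) * (2^(2*J-2*i) * (2*i).choose ((2*i)/2))^2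
      = (2*i) * ((2*(i:ℕ)).choose i)^2 * 16^(J-i) := by
        rw [mul_pow, show (2*i)/2 = i by omega, hpow]
        ring
  _ ≤ (2*J) * ((2*J).choose J)^2 := this
  _ = (2*J) * ((2*J).choose ((2*J)/2))^2 := by rw [show (2*J)/2 = J by omega]

lemma L4 {n K : ℕ} (hn : Even n) (hK1 : 1 ≤ K) (hKn : K ≤ n) :
    K * (2^(n-K) * K.choose (K/2))^2 ≤ n * (n.choose (n/2))^2 := by
  obtain ⟨J, hJ⟩ := hn
  have hn2 : n = 2 * J := by omega
  subst hn2
  rcases Nat.even_or_odd K with hKe | hKo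
  · obtain ⟨i, hi⟩ := hKe
    have hK : K = 2*i := by omega
    subst hK
    exact L4even (by omega)
  · obtain ⟨i, hi⟩ := hKo
    subst hi
    have hlt : 2*i+1 < 2*J := by omega
    have hstep : (2*i+1) * (2^(2*J-(2*i+1)) * (2*i+1).choose ((2*i+1)/2))^2
        ≤ (2*i+2) * (2^(2*J-(2*i+2)) * (2*i+2).choose ((2*i+2)/2))^2 := by
      have hch : (2*i+2).choose (i+1) = 2 * (2*i+1).choose i := by
        have hp : (2*i+2).choose (i+1) = (2*i+1).choose i + (2*i+1).choose (i+1) :=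
          Nat.choose_succ_succ (2*i+1) i ▸ rfl
        have hsymm : (2*i+1).choose (i+1) = (2*i+1).choose i := by
          rw [← Nat.choose_symm (by omega : i+1 ≤ 2*i+1)]
          congr 1; omega
        omega
      have hdiv1 : (2*i+1)/2 = i := by omega
      have hdiv2 : (2*i+2)/2 = i+1 := by omega
      rw [hdiv1, hdiv2, hch]
      have hexp : 2^(2*J-(2*i+1)) = 2 * 2^(2*J-(2*i+2)) := by
        rw [← pow_succ']
        congr 1
        omega
      rw [hexp]
      have : (2 * 2^(2*J-(2*i+2)) * (2*i+1).choose i)^2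
          = (2^(2*J-(2*i+2)) * (2 * (2*i+1).choose i))^2 := by ring
      rw [this]
      exact Nat.mul_le_mul_right _ (by omega)
    refine hstep.trans ?_
    have := L4even (J := J) (i := i+1) (by omega)
    calc (2*i+2) * (2^(2*J-(2*i+2)) * (2*i+2).choose ((2*i+2)/2))^2
        = (2*(i+1)) * (2^(2*J-2*(i+1)) * (2*(i+1)).choose ((2*(i+1))/2))^2 := by
          have e1 : 2*i+2 = 2*(i+1) := by ring
          rw [e1]
    _ ≤ (2*J) * ((2*J).choose ((2*J)/2))^2 := this

lemma count_free_pattern {n : ℕ} (S : Finset (Fin n)) (t : ℕ) :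
    (univ.filter fun ξ : Fin n → Bool => (S.filter fun i => ξ i = true).card = t).card
      = 2 ^ (Sᶜ.card) * (S.card).choose t := by
  set φ : (Fin n → Bool) → (Fin n → Bool) := fun ξ i => if i ∈ S then false else ξ i with hφ
  set Pset : Finset (Fin n → Bool) := univ.filter (fun p => ∀ i ∈ S, p i = false) with hP
  have hmaps : ∀ ξ ∈ (univ.filter fun ξ : Fin n → Bool =>
      (S.filter fun i => ξ i = true).card = t), φ ξ ∈ Pset := by
    intro ξ _
    simp only [hP, Finset.mem_filter, mem_univ, true_and]
    intro i hi
    simp [hφ, hi]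
  rw [Finset.card_eq_sum_card_fiberwise hmaps]
  have hfib : ∀ p ∈ Pset,
      ((univ.filter fun ξ : Fin n → Bool => (S.filter fun i => ξ i = true).card = t).filter
        fun ξ => φ ξ = p).card = (S.card).choose t := by
    intro p hp
    simp only [hP, Finset.mem_filter, mem_univ, true_and] at hp
    rw [← count_pattern S p t]
    congr 1
    rw [Finset.filter_filter]
    apply Finset.filter_congr
    intro ξ _
    constructor
    · rintro ⟨hcard, hfe⟩
      refine ⟨fun i hi => ?_, hcard⟩
      have := congrFun hfe i
      simpa [hφ, hi] using this
    · rintro ⟨hpat, hcard⟩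
      refine ⟨hcard, funext fun i => ?_⟩
      by_cases hi : i ∈ S
      · simp [hφ, hi, (hp i hi).symm]
      · simp [hφ, hi, hpat i hi]
  rw [Finset.sum_congr rfl hfib, Finset.sum_const, smul_eq_mul]
  congr 1
  rw [hP]
  have : (univ.filter fun p : Fin n → Bool => ∀ i ∈ S, p i = false)
      = (univ.filter fun p : Fin n → Bool => ∀ i ∉ Sᶜ, p i = (fun _ => false) i) := by
    apply Finset.filter_congr
    intro p _
    simp [Finset.mem_compl]
  rw [this, count_free]


lemma countZero_eq {n : ℕ} (hn : Even n) : countZero n = n.choose (n / 2) := by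
  unfold countZero
  have hcong : (univ.filter fun ξ : Fin n → Bool =>
      (∑ i : Fin n, (if ξ i then (1 : ℤ) else -1)) = 0)
      = (univ.filter fun ξ : Fin n → Bool =>
        ((univ : Finset (Fin n)).filter fun i => ξ i = true).card = n / 2) := by
    apply Finset.filter_congr
    intro ξ _
    rw [sum_pm univ ξ]
    simp only [Finset.card_univ, Fintype.card_fin]
    obtain ⟨k, hk⟩ := hn
    constructor
    · intro h; omega
    · intro h; rw [h]; push_cast; omega
  rw [hcong, count_free_pattern]
  simp

section Main

variable {n m : ℕ}

-- prefix and tail index sets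
private def Spre (n m : ℕ) : Finset (Fin n) := univ.filter fun i : Fin n => (i : ℕ) < m
private def Stail (n m : ℕ) : Finset (Fin n) := univ.filter fun i : Fin n => ¬ (i : ℕ) < m

lemma Spre_card (hmn : m ≤ n) : (Spre n m).card = m := card_lt_filter hmn

lemma Stail_card (hmn : m ≤ n) : (Stail n m).card = n - m := by
  have h := Finset.card_filter_add_card_filter_not
    (s := (univ : Finset (Fin n))) (p := fun i : Fin n => (i : ℕ) < m)
  have h2 := Spre_card (n := n) (m := m) hmn
  simp only [Finset.card_univ, Fintype.card_fin] at h
  unfold Spre at h2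
  unfold Stail
  omega

lemma Stail_compl_card (hmn : m ≤ n) : ((Stail n m)ᶜ).card = m := by
  have : (Stail n m)ᶜ = Spre n m := by
    unfold Stail Spre
    rw [Finset.compl_filter]
    simp
  rw [this, Spre_card hmn]

-- splitting the mixed sum
lemma sum_split (f g : Fin n → ℤ) :
    (∑ i : Fin n, (if (i : ℕ) < m then f i else g i))
      = (∑ i ∈ Spre n m, f i) + (∑ i ∈ Stail n m, g i) := by
  rw [← Finset.sum_filter_add_sum_filter_not univ (fun i : Fin n => (i : ℕ) < m)]
  congr 1
  · apply Finset.sum_congr rfl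
    intro i hi
    simp only [Finset.mem_filter] at hi
    simp [hi.2]
  · apply Finset.sum_congr rfl
    intro i hi
    simp only [Finset.mem_filter] at hi
    simp [hi.2]

noncomputable def spre (n m : ℕ) (p : Fin n → Bool) : ℤ :=
  ∑ i ∈ Spre n m, (if p i then (1:ℤ) else -1)

noncomputable def tailCount (n m : ℕ) (s : ℤ) : ℕ :=
  (univ.filter fun ξ' : Fin n → Bool =>
    2 * (((Stail n m).filter fun i => ξ' i = true).card : ℤ) - ((Stail n m).card : ℤ) = s).card

noncomputable def patCount (n m : ℕ) (p : Fin n → Bool) (s : ℤ) : ℕ :=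
  (univ.filter fun ξ : Fin n → Bool =>
    (∀ i ∉ Stail n m, ξ i = p i) ∧
    2 * (((Stail n m).filter fun i => ξ i = true).card : ℤ) - ((Stail n m).card : ℤ) = s).card

lemma tail_relation (hmn : m ≤ n) (p : Fin n → Bool) (s : ℤ) :
    tailCount n m s = 2 ^ m * patCount n m p s := by
  by_cases h : ∃ t : ℕ, ((Stail n m).card : ℤ) + s = 2 * t
  · obtain ⟨t, ht⟩ := h
    have hiff : ∀ ξ : Fin n → Bool,
        (2 * (((Stail n m).filter fun i => ξ i = true).card : ℤ) - ((Stail n m).card : ℤ) = s)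
        ↔ (((Stail n m).filter fun i => ξ i = true).card = t) := by
      intro ξ
      constructor
      · intro hh; omega
      · intro hh; rw [hh]; omega
    have e1 : tailCount n m s = 2 ^ m * ((Stail n m).card).choose t := by
      unfold tailCount
      rw [Finset.filter_congr (fun ξ _ => hiff ξ), count_free_pattern, Stail_compl_card hmn]
    have e2 : patCount n m p s = ((Stail n m).card).choose t := by
      unfold patCount
      have heq : (univ.filter fun ξ : Fin n → Bool =>
          (∀ i ∉ Stail n m, ξ i = p i) ∧
          2 * (((Stail n m).filter fun i => ξ i = true).card : ℤ) - ((Stail n m).card : ℤ) = s)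
          = univ.filter fun ξ : Fin n → Bool =>
            (∀ i ∉ Stail n m, ξ i = p i) ∧
            ((Stail n m).filter fun i => ξ i = true).card = t :=
        Finset.filter_congr (fun ξ _ => and_congr_right fun _ => hiff ξ)
      rw [heq]
      exact count_pattern _ p t
    rw [e1, e2]
  · have e1 : tailCount n m s = 0 := by
      unfold tailCount
      rw [Finset.card_eq_zero, Finset.filter_eq_empty_iff]
      intro ξ _
      intro hc
      exact h ⟨((Stail n m).filter fun i => ξ i = true).card, by omega⟩
    have e2 : patCount n m p s = 0 := by
      unfold patCount
      rw [Finset.card_eq_zero, Finset.filter_eq_empty_iff]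
      rintro ξ _ ⟨_, hc⟩
      exact h ⟨((Stail n m).filter fun i => ξ i = true).card, by omega⟩
    rw [e1, e2, mul_zero]

lemma patCount_le (hmn : m ≤ n) (p : Fin n → Bool) (s : ℤ) :
    patCount n m p s ≤ (n - m).choose ((n - m) / 2) := by
  by_cases h : ∃ t : ℕ, ((Stail n m).card : ℤ) + s = 2 * t
  · obtain ⟨t, ht⟩ := h
    have hiff : ∀ ξ : Fin n → Bool,
        (2 * (((Stail n m).filter fun i => ξ i = true).card : ℤ) - ((Stail n m).card : ℤ) = s)
        ↔ (((Stail n m).filter fun i => ξ i = true).card = t) := by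
      intro ξ
      constructor
      · intro hh; omega
      · intro hh; rw [hh]; omega
    have e2 : patCount n m p s = ((Stail n m).card).choose t := by
      unfold patCount
      have heq : (univ.filter fun ξ : Fin n → Bool =>
          (∀ i ∉ Stail n m, ξ i = p i) ∧
          2 * (((Stail n m).filter fun i => ξ i = true).card : ℤ) - ((Stail n m).card : ℤ) = s)
          = univ.filter fun ξ : Fin n → Bool =>
            (∀ i ∉ Stail n m, ξ i = p i) ∧
            ((Stail n m).filter fun i => ξ i = true).card = t :=
        Finset.filter_congr (fun ξ _ => and_congr_right fun _ => hiff ξ)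
      rw [heq]
      exact count_pattern _ p t
    rw [e2, Stail_card hmn]
    exact Nat.choose_le_middle t (n - m)
  · have e2 : patCount n m p s = 0 := by
      unfold patCount
      rw [Finset.card_eq_zero, Finset.filter_eq_empty_iff]
      rintro ξ _ ⟨_, hc⟩
      exact h ⟨((Stail n m).filter fun i => ξ i = true).card, by omega⟩
    rw [e2]
    exact Nat.zero_le _

lemma tailCount_le (hmn : m ≤ n) (s : ℤ) :
    tailCount n m s ≤ 2 ^ m * (n - m).choose ((n - m) / 2) := by
  rw [tail_relation hmn (fun _ => false) s]
  exact Nat.mul_le_mul_left _ (patCount_le hmn _ s)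

-- the condition in countBoth, rewritten
lemma cond_rewrite (ξ ξ' : Fin n → Bool) :
    ((∑ i : Fin n, (if (i : ℕ) < m then (if ξ i then (1 : ℤ) else -1)
           else (if ξ' i then (1 : ℤ) else -1))) = 0)
    ↔ (2 * (((Stail n m).filter fun i => ξ' i = true).card : ℤ) - ((Stail n m).card : ℤ)
        = - spre n m ξ) := by
  rw [sum_split (fun i => if ξ i then (1:ℤ) else -1) (fun i => if ξ' i then (1:ℤ) else -1),
    sum_pm (Stail n m) ξ']
  unfold spre
  constructor <;> (intro h; omega)

def Zset (n : ℕ) : Finset (Fin n → Bool) :=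
  univ.filter fun ξ : Fin n → Bool => (∑ i : Fin n, (if ξ i then (1:ℤ) else -1)) = 0

lemma Zset_card : (Zset n).card = countZero n := rfl

lemma countBoth_eq_sum :
    countBoth n m = ∑ ξ ∈ Zset n, tailCount n m (- spre n m ξ) := by
  have hprod : countBoth n m
      = ∑ ξ ∈ univ.filter (fun ξ : Fin n → Bool =>
          (∑ i : Fin n, (if ξ i then (1:ℤ) else -1)) = 0),
        (univ.filter fun ξ' : Fin n → Bool =>
          (∑ i : Fin n, (if (i : ℕ) < m then (if ξ i then (1 : ℤ) else -1)
           else (if ξ' i then (1 : ℤ) else -1))) = 0).card := by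
    unfold countBoth
    have := card_filter_prod (fun ξ : Fin n → Bool =>
        (∑ i : Fin n, (if ξ i then (1:ℤ) else -1)) = 0)
      (fun ξ ξ' : Fin n → Bool => (∑ i : Fin n, (if (i : ℕ) < m then (if ξ i then (1 : ℤ) else -1)
           else (if ξ' i then (1 : ℤ) else -1))) = 0)
    convert this using 2 <;> congr
  rw [hprod]
  apply Finset.sum_congr rfl
  intro ξ _
  unfold tailCount
  congr 1
  apply Finset.filter_congr
  intro ξ' _
  exact cond_rewrite ξ ξ'

lemma countBoth_le (hmn : m ≤ n) :
    countBoth n m ≤ countZero n * (2 ^ m * (n - m).choose ((n - m) / 2)) := by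
  rw [countBoth_eq_sum, ← Zset_card]
  calc ∑ ξ ∈ Zset n, tailCount n m (- spre n m ξ)
      ≤ ∑ _ξ ∈ Zset n, (2 ^ m * (n - m).choose ((n - m) / 2)) :=
        Finset.sum_le_sum (fun ξ _ => tailCount_le hmn _)
  _ = _ := by rw [Finset.sum_const, smul_eq_mul]

-- the prefix-projection map
def phi (n m : ℕ) (ξ : Fin n → Bool) : Fin n → Bool :=
  fun i => if (i : ℕ) < m then ξ i else false

noncomputable def Pset (n m : ℕ) : Finset (Fin n → Bool) :=
  univ.filter fun p : Fin n → Bool => ∀ i : Fin n, ¬ ((i : ℕ) < m) → p i = false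

lemma phi_maps (ξ : Fin n → Bool) : phi n m ξ ∈ Pset n m := by
  simp only [Pset, Finset.mem_filter, mem_univ, true_and]
  intro i hi
  simp [phi, hi]

lemma Pset_card (hmn : m ≤ n) : (Pset n m).card = 2 ^ m := by
  have heq : Pset n m = univ.filter fun p : Fin n → Bool =>
      ∀ i ∉ Spre n m, p i = (fun _ => false) i := by
    unfold Pset Spre
    apply Finset.filter_congr
    intro p _
    simp
  rw [heq, count_free, Spre_card hmn]

lemma spre_phi (ξ : Fin n → Bool) : spre n m (phi n m ξ) = spre n m ξ := by
  unfold spre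
  apply Finset.sum_congr rfl
  intro i hi
  simp only [Spre, Finset.mem_filter] at hi
  simp [phi, hi.2]

lemma notin_Stail (i : Fin n) : i ∉ Stail n m ↔ (i : ℕ) < m := by
  simp [Stail]

lemma phi_eq_iff {p : Fin n → Bool} (hp : p ∈ Pset n m) (ξ : Fin n → Bool) :
    phi n m ξ = p ↔ ∀ i ∉ Stail n m, ξ i = p i := by
  simp only [Pset, Finset.mem_filter, mem_univ, true_and] at hp
  constructor
  · intro h i hi
    rw [notin_Stail] at hi
    have := congrFun h i
    simpa [phi, hi] using this
  · intro h
    funext i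
    by_cases hi : (i : ℕ) < m
    · rw [show phi n m ξ i = ξ i from by simp [phi, hi]]
      exact h i ((notin_Stail i).2 hi)
    · rw [show phi n m ξ i = false from by simp [phi, hi], hp i hi]

lemma fiber_eq_patCount {p : Fin n → Bool} (hp : p ∈ Pset n m) :
    ((Zset n).filter fun ξ => phi n m ξ = p).card = patCount n m p (- spre n m p) := by
  unfold Zset patCount
  rw [Finset.filter_filter]
  congr 1
  apply Finset.filter_congr
  intro ξ _
  constructor
  · rintro ⟨hsum, hphi⟩
    have hpat := (phi_eq_iff hp ξ).1 hphi
    refine ⟨hpat, ?_⟩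
    have hsplit : (∑ i : Fin n, (if ξ i then (1:ℤ) else -1))
        = (∑ i ∈ Spre n m, (if ξ i then (1:ℤ) else -1))
          + (∑ i ∈ Stail n m, (if ξ i then (1:ℤ) else -1)) := by
      have := sum_split (n := n) (m := m)
        (fun i => if ξ i then (1:ℤ) else -1) (fun i => if ξ i then (1:ℤ) else -1)
      rw [← this]
      apply Finset.sum_congr rfl
      intro i _
      by_cases hi : (i : ℕ) < m <;> simp [hi]
    have hspre : (∑ i ∈ Spre n m, (if ξ i then (1:ℤ) else -1)) = spre n m p := by
      unfold spre
      apply Finset.sum_congr rfl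
      intro i hi
      simp only [Spre, Finset.mem_filter] at hi
      rw [hpat i ((notin_Stail i).2 hi.2)]
    rw [hsplit, hspre, sum_pm (Stail n m) ξ] at hsum
    omega
  · rintro ⟨hpat, hc⟩
    refine ⟨?_, (phi_eq_iff hp ξ).2 hpat⟩
    have hsplit : (∑ i : Fin n, (if ξ i then (1:ℤ) else -1))
        = (∑ i ∈ Spre n m, (if ξ i then (1:ℤ) else -1))
          + (∑ i ∈ Stail n m, (if ξ i then (1:ℤ) else -1)) := by
      have := sum_split (n := n) (m := m)
        (fun i => if ξ i then (1:ℤ) else -1) (fun i => if ξ i then (1:ℤ) else -1)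
      rw [← this]
      apply Finset.sum_congr rfl
      intro i _
      by_cases hi : (i : ℕ) < m <;> simp [hi]
    have hspre : (∑ i ∈ Spre n m, (if ξ i then (1:ℤ) else -1)) = spre n m p := by
      unfold spre
      apply Finset.sum_congr rfl
      intro i hi
      simp only [Spre, Finset.mem_filter] at hi
      rw [hpat i ((notin_Stail i).2 hi.2)]
    rw [hsplit, hspre, sum_pm (Stail n m) ξ]
    omega

lemma countZero_eq_sum_fibers (hmn : m ≤ n) :
    countZero n = ∑ p ∈ Pset n m, ((Zset n).filter fun ξ => phi n m ξ = p).card := by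
  rw [← Zset_card]
  exact Finset.card_eq_sum_card_fiberwise (fun ξ _ => phi_maps ξ)

lemma countBoth_eq_fiber_sum (hmn : m ≤ n) :
    countBoth n m = ∑ p ∈ Pset n m,
      ((Zset n).filter fun ξ => phi n m ξ = p).card
        * (2 ^ m * ((Zset n).filter fun ξ => phi n m ξ = p).card) := by
  rw [countBoth_eq_sum]
  rw [← Finset.sum_fiberwise_of_maps_to (fun ξ _ => phi_maps (m := m) ξ)
    (fun ξ => tailCount n m (- spre n m ξ))]
  apply Finset.sum_congr rfl
  intro p hp
  have hinner : ∀ ξ ∈ (Zset n).filter fun ξ => phi n m ξ = p,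
      tailCount n m (- spre n m ξ) = 2 ^ m * patCount n m p (- spre n m p) := by
    intro ξ hξ
    simp only [Finset.mem_filter] at hξ
    have h1 : spre n m ξ = spre n m p := by rw [← hξ.2, spre_phi]
    rw [h1, tail_relation hmn p]
  rw [Finset.sum_congr rfl hinner, Finset.sum_const, smul_eq_mul]
  rw [fiber_eq_patCount hp]

lemma countZero_sq_le (hmn : m ≤ n) : countZero n ^ 2 ≤ countBoth n m := by
  have hZ := countZero_eq_sum_fibers (n := n) (m := m) hmn
  have hB := countBoth_eq_fiber_sum (n := n) (m := m) hmn
  set a : (Fin n → Bool) → ℕ := fun p => ((Zset n).filter fun ξ => phi n m ξ = p).card with ha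
  have hcs : ((∑ p ∈ Pset n m, (a p : ℤ)))^2
      ≤ (Pset n m).card * ∑ p ∈ Pset n m, (a p : ℤ)^2 :=
    sq_sum_le_card_mul_sum_sq
  have hcsn : (∑ p ∈ Pset n m, a p)^2 ≤ (Pset n m).card * ∑ p ∈ Pset n m, (a p)^2 := by
    exact_mod_cast (by push_cast; exact hcs :
      ((∑ p ∈ Pset n m, a p : ℕ) : ℤ)^2 ≤ ((Pset n m).card * ∑ p ∈ Pset n m, (a p)^2 : ℕ))
  calc countZero n ^ 2 = (∑ p ∈ Pset n m, a p)^2 := by rw [hZ]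
  _ ≤ (Pset n m).card * ∑ p ∈ Pset n m, (a p)^2 := hcsn
  _ = 2 ^ m * ∑ p ∈ Pset n m, (a p)^2 := by rw [Pset_card hmn]
  _ = ∑ p ∈ Pset n m, a p * (2 ^ m * a p) := by
      rw [Finset.mul_sum]
      apply Finset.sum_congr rfl
      intro p _
      ring
  _ = countBoth n m := hB.symm

end Main
end Helpers

/-- There is `C > 0` such that for every `ε ∈ (0,1)`, even `n ≥ 2`, and `0 ≤ m ≤ (1−ε)n`,
`|α(n,m) − 1| ≤ C m/(εn)`. -/
theorem alpha_close_to_one_linear :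
    ∃ C : ℝ, 0 < C ∧
      ∀ ε : ℝ, 0 < ε → ε < 1 → ∀ n : ℕ, Even n → 2 ≤ n →
      ∀ m : ℕ, (m : ℝ) ≤ (1 - ε) * n →
        |alphaCorr n m - 1| ≤ C * m / (ε * n) := by
  refine ⟨1, one_pos, ?_⟩
  intro ε hε0 hε1 n hneven hn2 m hm
  have hnR : (2:ℝ) ≤ n := by exact_mod_cast hn2
  have hnpos : (0:ℝ) < n := by linarith
  have hεn : (0:ℝ) < ε * n := by positivity
  have hmRlt : (m:ℝ) < n := by nlinarith
  have hmltn : m < n := by exact_mod_cast hmRlt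
  have hmn : m ≤ n := le_of_lt hmltn
  have hnm1 : 1 ≤ n - m := by omega
  have hεnm : ε * n ≤ (n:ℝ) - m := by nlinarith
  have hnmpos : (0:ℝ) < (n:ℝ) - m := lt_of_lt_of_le hεn hεnm
  set Z : ℕ := countZero n with hZdef
  set B : ℕ := countBoth n m with hBdef
  set M : ℕ := 2 ^ m * (n - m).choose ((n - m) / 2) with hMdef
  have hZeq : Z = n.choose (n / 2) := countZero_eq hneven
  have hZpos : 0 < Z := hZeq ▸ Nat.choose_pos (Nat.div_le_self n 2)
  have hZR : (0:ℝ) < Z := by exact_mod_cast hZpos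
  have hZne : (Z:ℝ) ≠ 0 := ne_of_gt hZR
  have h1 : (Z:ℝ)^2 ≤ B := by exact_mod_cast countZero_sq_le hmn
  have h2 : (B:ℝ) ≤ Z * M := by exact_mod_cast countBoth_le hmn
  have hL4' := L4 (n := n) (K := n - m) hneven hnm1 (Nat.sub_le n m)
  rw [show n - (n - m) = m from by omega] at hL4'
  rw [← hZeq] at hL4'
  have h3 : ((n:ℝ) - m) * (M:ℝ)^2 ≤ (n:ℝ) * (Z:ℝ)^2 := by
    have := (Nat.cast_le (α := ℝ)).2 hL4'
    push_cast [Nat.cast_sub hmn] at this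
    calc ((n:ℝ) - m) * (M:ℝ)^2
        = ((n:ℝ) - m) * ((2:ℝ) ^ m * ((n - m).choose ((n - m) / 2) : ℝ)) ^ 2 := by
          rw [hMdef]; push_cast; ring
    _ ≤ (n:ℝ) * (Z:ℝ)^2 := this
  have halpha : alphaCorr n m = (B:ℝ) / (Z:ℝ)^2 := by
    unfold alphaCorr
    rw [← hZdef, ← hBdef]
    have h2npos : ((2:ℝ)^n) ≠ 0 := by positivity
    have h22npos : ((2:ℝ)^(2*n)) ≠ 0 := by positivity
    field_simp
    rw [← pow_mul]
    ring
  have hZM : (Z:ℝ) ≤ M := by nlinarith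
  have halpha_ge : 1 ≤ alphaCorr n m := by
    rw [halpha, le_div_iff₀ (by positivity)]
    linarith
  have halpha_le : alphaCorr n m ≤ (M:ℝ) / Z := by
    rw [halpha, div_le_div_iff₀ (by positivity) hZR]
    nlinarith
  rw [abs_of_nonneg (by linarith)]
  have key : (M:ℝ)/Z - 1 ≤ (m:ℝ)/(ε*n) := by
    rw [div_sub_one hZne, div_le_div_iff₀ hZR hεn]
    have e1 : ((M:ℝ) - Z) * (ε*n) ≤ ((M:ℝ) - Z) * ((n:ℝ) - m) :=
      mul_le_mul_of_nonneg_left hεnm (by linarith)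
    have e2 : ((M:ℝ) - Z) * ((n:ℝ) - m) ≤ (m:ℝ) * Z := by
      nlinarith [mul_nonneg (sub_nonneg.2 hZM) hZR.le, sq_nonneg ((M:ℝ) - Z)]
    linarith
  calc alphaCorr n m - 1 ≤ (M:ℝ)/Z - 1 := by linarith
  _ ≤ (m:ℝ)/(ε*n) := key
  _ = 1 * m / (ε*n) := by ring
end

section
/- Let V be a linear subspace of ℝ^n of dimension r. Then V contains at most 2^r vectors all of whose coordinates lie in {−1,+1}. (Any vector in V is determined by its values on a set of r coordinates on which a basis of V has full rank.) -/
/-- An `r`-dimensional linear subspace of `ℝⁿ` contains at most `2^r` vectors all of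
whose coordinates lie in `{−1, +1}`. -/
theorem sign_vectors_in_subspace_le (n r : ℕ) (V : Submodule ℝ (Fin n → ℝ))
    (hV : Module.finrank ℝ V = r) :
    Set.ncard {v : Fin n → ℝ | v ∈ V ∧ ∀ i, v i = 1 ∨ v i = -1} ≤ 2 ^ r := by
  classical
  set b := Pi.basisFun ℝ (Fin n)
  set f : Fin n → Module.Dual ℝ V := fun i => V.subtype.dualMap (b.coord i) with hf
  have hfapp : ∀ (i : Fin n) (u : V), f i u = (u : Fin n → ℝ) i := by
    intro i u
    simp [hf, b, LinearMap.dualMap_apply, Module.Basis.coord_apply]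
  -- the restrictions of coordinate functionals span the dual of V
  have hsurj : Function.Surjective (V.subtype.dualMap) :=
    LinearMap.dualMap_surjective_of_injective V.injective_subtype
  have hspanf : Submodule.span ℝ (Set.range f) = ⊤ := by
    have h1 : Submodule.span ℝ (Set.range b.coord) = ⊤ := by
      have : Set.range b.coord = Set.range b.dualBasis := by
        rw [← Module.Basis.coe_dualBasis]
      rw [this, b.dualBasis.span_eq]
    have h2 : Set.range f = (V.subtype.dualMap) '' (Set.range b.coord) := by
      rw [← Set.range_comp]; rfl
    rw [h2, ← Submodule.map_span, h1, Submodule.map_top, LinearMap.range_eq_top.mpr hsurj]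
  obtain ⟨t, hts, hspan, hli⟩ := exists_linearIndependent ℝ (Set.range f)
  rw [hspanf] at hspan
  have htfin : t.Finite := hli.setFinite
  haveI : Fintype t := htfin.fintype
  -- card t = r
  have hcard : t.toFinset.card = r := by
    have := finrank_span_set_eq_card hli
    rw [hspan] at this
    rw [← this, finrank_top, Subspace.dual_finrank_eq, hV]
  -- choose indices
  have hc : ∀ φ : t, ∃ i, f i = (φ : Module.Dual ℝ V) := fun φ => hts φ.2
  choose c hcspec using hc
  -- the injection into t → Prop
  set S := {v : Fin n → ℝ | v ∈ V ∧ ∀ i, v i = 1 ∨ v i = -1}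
  set g : (Fin n → ℝ) → (t → Prop) := fun v φ => v (c φ) = 1 with hg
  have hinj : Set.InjOn g S := by
    intro v hv w hw hvw
    have hu : ∀ φ : t, (φ : Module.Dual ℝ V) ((⟨v, hv.1⟩ : V) - ⟨w, hw.1⟩) = 0 := by
      intro φ
      have h1 : v (c φ) = w (c φ) := by
        have := congrFun hvw φ
        simp only [hg, eq_iff_iff] at this
        rcases hv.2 (c φ) with h | h <;> rcases hw.2 (c φ) with h' | h' <;>
          simp [h, h'] at this ⊢ <;> simp [h, h', this]
      rw [← hcspec φ, map_sub, hfapp, hfapp]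
      simpa using sub_eq_zero.mpr h1
    have hall : ∀ ψ : Module.Dual ℝ V, ψ ((⟨v, hv.1⟩ : V) - ⟨w, hw.1⟩) = 0 := by
      intro ψ
      have hmem : ψ ∈ LinearMap.ker (Module.Dual.eval ℝ V ((⟨v, hv.1⟩ : V) - ⟨w, hw.1⟩)) := by
        have : t ⊆ ↑(LinearMap.ker (Module.Dual.eval ℝ V ((⟨v, hv.1⟩ : V) - ⟨w, hw.1⟩))) := by
          intro φ hφ
          simpa [LinearMap.mem_ker] using hu ⟨φ, hφ⟩
        have := Submodule.span_le.mpr this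
        rw [hspan] at this
        exact this trivial
      simpa [LinearMap.mem_ker] using hmem
    funext i
    have := hall (f i)
    rw [map_sub, hfapp, hfapp] at this
    simpa [sub_eq_zero] using this
  have hmaps : Set.MapsTo g S (Set.univ : Set (t → Prop)) := fun v _ => trivial
  calc S.ncard ≤ (Set.univ : Set (t → Prop)).ncard :=
        Set.ncard_le_ncard_of_injOn g hmaps hinj Set.finite_univ
    _ = Fintype.card (t → Prop) := by
        rw [Set.ncard_univ, Nat.card_eq_fintype_card]
    _ = 2 ^ r := by
        rw [Fintype.card_fun, Fintype.card_prop, ← hcard, Set.toFinset_card]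
end
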